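/- In the system on ℝ² with dynamics ẋ₁ = cos(u), ẋ₂ = sin(u), u ∈ [0,π] (so admissible velocities are F(x) = {(cos u, sin u) : u ∈ [0,π]}), obstacle X_obst = (−∞,0]×(−∞,0], free space its complement, and cost equal to time: for every point x = (x₁, x₂) ∈ X_free with x₂ ≤ 0 (hence x₁ > 0), the clearance clr(x) equals x₁; and for every x ∈ X_free with x₂ > 0, clr(x) = ∞. -/

import Mathlib

open Set MeasureTheory ENNReal

/-- Sharp-corner obstacle. -/
def CornerObst : Set (ℝ × ℝ) := Iic (0:ℝ) ×ˢ Iic (0:ℝ)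

/-- Free space: complement of the sharp corner. -/
def CornerFree : Set (ℝ × ℝ) := CornerObstᶜ

/-- Admissible velocities: unit vectors `(cos u, sin u)` with `u ∈ [0, π]`. -/
def HorizVel : Set (ℝ × ℝ) := {v | ∃ u ∈ Icc (0:ℝ) Real.pi, v = (Real.cos u, Real.sin u)}

/-- Admissible trajectories of the system `ẋ = (cos u, sin u)`, `u ∈ [0,π]`, from `x`,
ending on the obstacle boundary at time `T`, staying in the closure of free space. -/
def HorizAdm (x : ℝ × ℝ) (T : ℝ) : Prop :=
  0 ≤ T ∧ ∃ π : ℝ → ℝ × ℝ, ∃ v : ℝ → ℝ × ℝ,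
    π 0 = x ∧ π T ∈ frontier CornerObst ∧
    (∀ t ∈ Icc (0:ℝ) T, π t ∈ closure CornerFree) ∧
    IntervalIntegrable v MeasureTheory.volume 0 T ∧
    (∀ᵐ t ∂(MeasureTheory.volume.restrict (Icc (0:ℝ) T)), v t ∈ HorizVel) ∧
    (∀ t ∈ Icc (0:ℝ) T, π t = x + ∫ s in (0:ℝ)..t, v s)

/-- Clearance for the horizontal-motion system: infimal time to reach the obstacle
boundary (`⊤` if unreachable). -/
noncomputable def horizClr (x : ℝ × ℝ) : ℝ≥0∞ :=
  sInf {c : ℝ≥0∞ | ∃ T : ℝ, HorizAdm x T ∧ c = ENNReal.ofReal T}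

lemma frontierCornerObst : frontier CornerObst = Iic (0:ℝ) ×ˢ {(0:ℝ)} ∪ {(0:ℝ)} ×ˢ Iic (0:ℝ) := by
  rw [CornerObst, frontier_prod_eq, frontier_Iic, closure_Iic]

/-- For the system admitting horizontal motion: clearance equals `x₁` in the lower
half-plane part of free space and is infinite above it. -/
theorem horiz_clearance :
    ∀ x : ℝ × ℝ, x ∈ CornerFree →
      (x.2 ≤ 0 → horizClr x = ENNReal.ofReal x.1) ∧
      (0 < x.2 → horizClr x = ⊤) := by
  intro x hx
  -- key lower-bound facts for any admissible T
  have key : ∀ T : ℝ, HorizAdm x T → x.1 ≤ T ∧ x.2 ≤ 0 := by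
    intro T h
    obtain ⟨hT, p, v, hp0, hpT, _, hvi, hvel, hode⟩ := h
    have hmem : T ∈ Icc (0:ℝ) T := ⟨hT, le_refl T⟩
    have hPT := hode T hmem
    have hv1 : IntervalIntegrable (fun s => (v s).1) volume 0 T := ⟨hvi.1.fst, hvi.2.fst⟩
    have hv2 : IntervalIntegrable (fun s => (v s).2) volume 0 T := ⟨hvi.1.snd, hvi.2.snd⟩
    have hb1 : ∀ᵐ t ∂(volume.restrict (Icc (0:ℝ) T)), (fun _ => (-1:ℝ)) t ≤ (v t).1 := by
      filter_upwards [hvel] with t ht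
      obtain ⟨u, hu, hvt⟩ := ht
      rw [hvt]; exact Real.neg_one_le_cos u
    have hb2 : ∀ᵐ t ∂(volume.restrict (Icc (0:ℝ) T)), 0 ≤ (v t).2 := by
      filter_upwards [hvel] with t ht
      obtain ⟨u, hu, hvt⟩ := ht
      rw [hvt]; exact Real.sin_nonneg_of_nonneg_of_le_pi hu.1 hu.2
    have hI1 : (-T : ℝ) ≤ ∫ s in (0:ℝ)..T, (v s).1 := by
      have := intervalIntegral.integral_mono_ae_restrict hT
        (intervalIntegrable_const (c := (-1:ℝ))) hv1 hb1
      simpa using this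
    have hI2 : (0:ℝ) ≤ ∫ s in (0:ℝ)..T, (v s).2 :=
      intervalIntegral.integral_nonneg_of_ae_restrict hT hb2
    have hc1 : (∫ s in (0:ℝ)..T, v s).1 = ∫ s in (0:ℝ)..T, (v s).1 := by
      have := (ContinuousLinearMap.fst ℝ ℝ ℝ).intervalIntegral_comp_comm (μ := volume)
        (a := 0) (b := T) hvi
      simpa using this.symm
    have hc2 : (∫ s in (0:ℝ)..T, v s).2 = ∫ s in (0:ℝ)..T, (v s).2 := by
      have := (ContinuousLinearMap.snd ℝ ℝ ℝ).intervalIntegral_comp_comm (μ := volume)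
        (a := 0) (b := T) hvi
      simpa using this.symm
    have hPT1 : (p T).1 = x.1 + ∫ s in (0:ℝ)..T, (v s).1 := by
      rw [hPT]; simp [hc1]
    have hPT2 : (p T).2 = x.2 + ∫ s in (0:ℝ)..T, (v s).2 := by
      rw [hPT]; simp [hc2]
    rw [frontierCornerObst] at hpT
    have hle1 : (p T).1 ≤ 0 := by
      rcases hpT with h | h
      · exact h.1
      · exact le_of_eq (by simpa using h.1)
    have hle2 : (p T).2 ≤ 0 := by
      rcases hpT with h | h
      · exact le_of_eq (by simpa using h.2)
      · exact h.2
    constructor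
    · nlinarith [hPT1 ▸ hle1]
    · nlinarith [hPT2 ▸ hle2]
  constructor
  · intro hx2
    have hx1 : 0 < x.1 := by
      by_contra h
      exact hx ⟨le_of_not_gt h, hx2⟩
    apply le_antisymm
    · -- construct trajectory
      apply sInf_le
      refine ⟨x.1, ⟨hx1.le, fun t => (x.1 - t, x.2), fun _ => ((-1:ℝ), (0:ℝ)), ?_, ?_, ?_, ?_, ?_, ?_⟩, rfl⟩
      · simp
      · rw [frontierCornerObst]
        right; exact ⟨by simp, by simpa using hx2⟩
      · intro t ht
        have : closure CornerFree = (Iio (0:ℝ) ×ˢ Iio (0:ℝ))ᶜ := by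
          rw [CornerFree, closure_compl, CornerObst, interior_prod_eq, interior_Iic]
        rw [this]
        intro hmem
        exact absurd hmem.1 (by simp; linarith [ht.2])
      · exact intervalIntegrable_const
      · filter_upwards with t
        exact ⟨Real.pi, ⟨Real.pi_pos.le, le_refl _⟩, by simp⟩
      · intro t ht
        rw [intervalIntegral.integral_const]
        ext <;> simp [sub_eq_add_neg]
    · refine le_sInf ?_
      rintro c ⟨T, hT, rfl⟩
      exact ENNReal.ofReal_le_ofReal (key T hT).1
  · intro hx2
    rw [horizClr]
    refine (congrArg sInf ?_).trans sInf_empty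
    rw [eq_empty_iff_forall_notMem]
    rintro c ⟨T, hT, rfl⟩
    exact absurd hx2 (not_lt.mpr (key T hT).2)
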